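/- arXiv:1008.2682 — 2 statements merged into one kernel-verified Lean document; each statement's English description precedes it below -/
import Mathlib

section
/- Let A be a self-adjoint operator on a separable complex Hilbert space H, let c ≥ 0, and let ψ ∈ H. For t > 0 and y ∈ ℝ define ψ(t,y) := f(t,A,y)ψ where f(t,x,y) = exp(yx − (1+c)tx²) via the functional calculus. Then for every t > 0, E‖ψ(t, ξ_t)‖² = ∫ exp(−2ctx²) dμ_ψ(x) ≤ ‖ψ‖², where ξ_t is a standard Brownian motion and μ_ψ is the spectral measure of A associated with ψ. In particular, if c = 0 then E‖ψ(t,ξ_t)‖² = ‖ψ‖². -/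
open MeasureTheory ProbabilityTheory Real

lemma aux_exp_quad_eq (a b : ℝ) (ha : 0 < a) :
    (fun x : ℝ => rexp (b * x - a * x ^ 2))
      = fun x => rexp (b ^ 2 / (4 * a)) * rexp (-a * (x - b / (2 * a)) ^ 2) := by
  funext x
  rw [← Real.exp_add]
  congr 1
  field_simp
  ring

lemma aux_integrable_exp_quad {a : ℝ} (b : ℝ) (ha : 0 < a) :
    Integrable (fun x : ℝ => rexp (b * x - a * x ^ 2)) := by
  rw [aux_exp_quad_eq a b ha]
  exact (Integrable.comp_sub_right (integrable_exp_neg_mul_sq ha) _).const_mul _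

lemma aux_integral_exp_quad {a : ℝ} (b : ℝ) (ha : 0 < a) :
    ∫ x : ℝ, rexp (b * x - a * x ^ 2) = Real.sqrt (π / a) * rexp (b ^ 2 / (4 * a)) := by
  rw [aux_exp_quad_eq a b ha, integral_const_mul,
    integral_sub_right_eq_self (fun x => rexp (-a * x ^ 2)) (b / (2 * a)),
    integral_gaussian]
  ring

lemma aux_lintegral_exp_gaussian {t : ℝ} (b : ℝ) (ht : 0 < t) :
    ∫⁻ y, ENNReal.ofReal (Real.exp (b * y)) ∂(gaussianReal 0 t.toNNReal)
      = ENNReal.ofReal (Real.exp (t * b ^ 2 / 2)) := by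
  have hv : t.toNNReal ≠ 0 := by
    simp [Real.toNNReal_eq_zero, not_le, ht]
  have hco : ((t.toNNReal : ℝ)) = t := Real.coe_toNNReal t ht.le
  have h2t : 0 < 1 / (2 * t) := by positivity
  rw [gaussianReal_of_var_ne_zero 0 hv,
    lintegral_withDensity_eq_lintegral_mul _ (measurable_gaussianPDF 0 _)
      (by fun_prop)]
  have heq : ∀ y : ℝ, gaussianPDFReal 0 t.toNNReal y * rexp (b * y)
      = (√(2 * π * t))⁻¹ * rexp (b * y - (1 / (2 * t)) * y ^ 2) := by
    intro y
    simp only [gaussianPDFReal, sub_zero, hco]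
    rw [mul_assoc, ← Real.exp_add]
    congr 1
    field_simp
    ring
  have h1 : (fun y => (gaussianPDF 0 t.toNNReal * fun y => ENNReal.ofReal (rexp (b * y))) y)
      = fun y => ENNReal.ofReal (gaussianPDFReal 0 t.toNNReal y * rexp (b * y)) := by
    funext y
    simp [gaussianPDF, ENNReal.ofReal_mul (gaussianPDFReal_nonneg _ _ _)]
  have hint : Integrable (fun y => gaussianPDFReal 0 t.toNNReal y * rexp (b * y)) := by
    simp only [heq]
    exact (aux_integrable_exp_quad b h2t).const_mul _
  rw [h1, ← ofReal_integral_eq_lintegral_ofReal hint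
    (ae_of_all _ fun y => mul_nonneg (gaussianPDFReal_nonneg _ _ _) (Real.exp_nonneg _))]
  congr 1
  simp only [heq]
  rw [integral_const_mul, aux_integral_exp_quad b h2t]
  have h3 : π / (1 / (2 * t)) = 2 * π * t := by field_simp
  have h4 : b ^ 2 / (4 * (1 / (2 * t))) = t * b ^ 2 / 2 := by field_simp; ring
  rw [h3, h4, ← mul_assoc, inv_mul_cancel₀ (by positivity : √(2 * π * t) ≠ 0), one_mul]

/-- For a self-adjoint operator `A` with spectral measure `μψ` of `ψ`, `c ≥ 0`, and
`Ψ t y = f(t,A,y)ψ` defined via functional calculus (so that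
`‖Ψ t y‖² = ∫ exp(yx − (1+c)tx²)² dμψ(x)`), one has
`E‖Ψ(t, ξ_t)‖² = ∫ exp(−2ctx²) dμψ ≤ ‖ψ‖²`, with equality `= ‖ψ‖²` if `c = 0`. -/
theorem stochastic_flow_L2_contraction
    {H : Type*} [NormedAddCommGroup H] [InnerProductSpace ℂ H]
    {Ω : Type*} [MeasurableSpace Ω] (P : Measure Ω) [IsProbabilityMeasure P]
    (ξ : ℝ → Ω → ℝ)
    (hξ : ∀ t : ℝ, 0 < t → Measure.map (ξ t) P = gaussianReal 0 t.toNNReal)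
    (c : ℝ) (hc : 0 ≤ c) (ψ : H) (μψ : Measure ℝ) [IsFiniteMeasure μψ]
    (hμtot : μψ Set.univ = ENNReal.ofReal (‖ψ‖ ^ 2))
    (Ψ : ℝ → ℝ → H)
    (hcalc : ∀ t y : ℝ, 0 < t →
      ‖Ψ t y‖ ^ 2 = ∫ x, (Real.exp (y * x - (1 + c) * t * x ^ 2)) ^ 2 ∂μψ) :
    ∀ t : ℝ, 0 < t →
      (∫ ω, ‖Ψ t (ξ t ω)‖ ^ 2 ∂P = ∫ x, Real.exp (-(2 * c * t * x ^ 2)) ∂μψ) ∧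
      (∫ ω, ‖Ψ t (ξ t ω)‖ ^ 2 ∂P ≤ ‖ψ‖ ^ 2) ∧
      (c = 0 → ∫ ω, ‖Ψ t (ξ t ω)‖ ^ 2 ∂P = ‖ψ‖ ^ 2) := by
  intro t ht
  set a : ℝ := (1 + c) * t with ha_def
  have hapos : 0 < a := by positivity
  set γ : Measure ℝ := gaussianReal 0 t.toNNReal with hγ_def
  have hξm : AEMeasurable (ξ t) P := by
    by_contra h
    have h0 := hξ t ht
    rw [Measure.map_of_not_aemeasurable h] at h0
    have h1 : (gaussianReal 0 t.toNNReal) Set.univ = 1 := measure_univ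
    rw [← h0] at h1
    simp at h1
  set G : ℝ → ℝ := fun y => ∫ x, (rexp (y * x - a * x ^ 2)) ^ 2 ∂μψ with hG_def
  have hFc : Continuous (fun p : ℝ × ℝ => (rexp (p.1 * p.2 - a * p.2 ^ 2)) ^ 2) := by
    fun_prop
  have hGsm : StronglyMeasurable G :=
    hFc.stronglyMeasurable.integral_prod_right'
  have hGnn : ∀ y, 0 ≤ G y := fun y => integral_nonneg fun x => sq_nonneg _
  have hint : ∀ y : ℝ, Integrable (fun x => (rexp (y * x - a * x ^ 2)) ^ 2) μψ := by
    intro y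
    refine (integrable_const (rexp (y ^ 2 / (2 * a)))).mono'
      (Continuous.aestronglyMeasurable (by fun_prop)) (ae_of_all _ fun x => ?_)
    rw [Real.norm_eq_abs, abs_of_nonneg (sq_nonneg _), sq, ← Real.exp_add]
    refine Real.exp_le_exp.mpr ?_
    rw [← sub_nonneg]
    have key : y ^ 2 / (2 * a) - ((y * x - a * x ^ 2) + (y * x - a * x ^ 2))
        = (y - 2 * a * x) ^ 2 / (2 * a) := by
      field_simp
      ring
    rw [key]
    positivity
  have hintexp : Integrable (fun x => rexp (-(2 * c * t * x ^ 2))) μψ := by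
    refine (integrable_const (1 : ℝ)).mono'
      (Continuous.aestronglyMeasurable (by fun_prop)) (ae_of_all _ fun x => ?_)
    rw [Real.norm_eq_abs, abs_of_nonneg (Real.exp_nonneg _)]
    exact Real.exp_le_one_iff.mpr (neg_nonpos.mpr (by positivity))
  have step1 : ∫ ω, ‖Ψ t (ξ t ω)‖ ^ 2 ∂P = ∫ y, G y ∂γ := by
    have h1 : ∫ ω, ‖Ψ t (ξ t ω)‖ ^ 2 ∂P = ∫ ω, G (ξ t ω) ∂P := by
      exact integral_congr_ae (Filter.Eventually.of_forall fun ω => hcalc t (ξ t ω) ht)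
    rw [h1, hγ_def, ← hξ t ht, integral_map hξm hGsm.aestronglyMeasurable]
  have step2 : ∫ y, G y ∂γ = ∫ x, rexp (-(2 * c * t * x ^ 2)) ∂μψ := by
    rw [integral_eq_lintegral_of_nonneg_ae (ae_of_all _ hGnn) hGsm.aestronglyMeasurable]
    have h2 : ∀ y, ENNReal.ofReal (G y)
        = ∫⁻ x, ENNReal.ofReal ((rexp (y * x - a * x ^ 2)) ^ 2) ∂μψ := fun y =>
      ofReal_integral_eq_lintegral_ofReal (hint y) (ae_of_all _ fun x => sq_nonneg _)
    simp only [h2]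
    rw [lintegral_lintegral_swap (hFc.measurable.ennreal_ofReal).aemeasurable]
    have h3 : ∀ x : ℝ, ∫⁻ y, ENNReal.ofReal ((rexp (y * x - a * x ^ 2)) ^ 2) ∂γ
        = ENNReal.ofReal (rexp (-(2 * c * t * x ^ 2))) := by
      intro x
      have hpt : ∀ y : ℝ, ENNReal.ofReal ((rexp (y * x - a * x ^ 2)) ^ 2)
          = ENNReal.ofReal (rexp (-(2 * a) * x ^ 2)) * ENNReal.ofReal (rexp ((2 * x) * y)) := by
        intro y
        rw [← ENNReal.ofReal_mul (Real.exp_nonneg _), ← Real.exp_add, sq, ← Real.exp_add]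
        congr 2
        ring
      simp only [hpt]
      rw [lintegral_const_mul _ (by fun_prop), hγ_def, aux_lintegral_exp_gaussian (2 * x) ht,
        ← ENNReal.ofReal_mul (Real.exp_nonneg _), ← Real.exp_add]
      congr 2
      rw [ha_def]
      ring
    simp only [h3]
    rw [← ofReal_integral_eq_lintegral_ofReal hintexp
        (ae_of_all _ fun x => Real.exp_nonneg _),
      ENNReal.toReal_ofReal (integral_nonneg fun x => Real.exp_nonneg _)]
  have key : ∫ ω, ‖Ψ t (ξ t ω)‖ ^ 2 ∂P = ∫ x, rexp (-(2 * c * t * x ^ 2)) ∂μψ :=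
    step1.trans step2
  have hone : ∫ x, (1 : ℝ) ∂μψ = ‖ψ‖ ^ 2 := by
    rw [integral_const, smul_eq_mul, mul_one, measureReal_def, hμtot,
      ENNReal.toReal_ofReal (by positivity)]
  refine ⟨key, ?_, ?_⟩
  · rw [key]
    calc ∫ x, rexp (-(2 * c * t * x ^ 2)) ∂μψ
        ≤ ∫ x, (1 : ℝ) ∂μψ := by
          refine integral_mono hintexp (integrable_const 1) fun x => ?_
          exact Real.exp_le_one_iff.mpr (neg_nonpos.mpr (by positivity))
      _ = ‖ψ‖ ^ 2 := hone
  · intro hc0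
    rw [key]
    simp only [hc0, mul_zero, zero_mul, neg_zero, Real.exp_zero]
    exact hone
end

section
/- Laplace-transform uniqueness step: let K* be a densely defined operator on a Hilbert space 𝔥 such that K* + c/2 is m-accretive, let 𝒟* be a core for K*, and let m : [0,∞) → 𝔥 be continuous with ⟨φ, m(t)⟩ = −∫₀ᵗ ⟨K*φ, m(s)⟩ ds for all φ ∈ 𝒟* and t ≥ 0. Then m ≡ 0. -/
open MeasureTheory

section Aux
open intervalIntegral Set Polynomial

lemma zero_on_Icc {f : ℝ → ℝ} {a b : ℝ} (hab : a < b) (hf : Continuous f) (h0 : ∀ x, 0 ≤ f x)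
    (hint : ∫ x in a..b, f x = 0) : ∀ x ∈ Icc a b, f x = 0 := by
  intro x hx
  by_contra hne
  have hpos : 0 < ∫ x in a..b, f x :=
    intervalIntegral.integral_pos hab hf.continuousOn (fun x _ => h0 x)
      ⟨x, hx, lt_of_le_of_ne (h0 x) (Ne.symm hne)⟩
  rw [hint] at hpos; exact lt_irrefl 0 hpos

lemma real_moments_case (T : ℝ) (hT : 0 < T) (h : ℝ → ℝ) (hh : Continuous h)
    (hmom : ∀ n : ℕ, ∫ s in (0:ℝ)..T, (Real.exp (T - s))^n * h s = 0) :
    ∀ s ∈ Icc (0:ℝ) T, h s = 0 := by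
  have hcont : ∀ p : ℝ[X], Continuous fun s => p.eval (Real.exp (T - s)) * h s := by
    intro p
    exact ((p.continuous_aeval).comp ((continuous_const.sub continuous_id).rexp)).mul hh
  have hpoly : ∀ p : ℝ[X], ∫ s in (0:ℝ)..T, p.eval (Real.exp (T - s)) * h s = 0 := by
    intro p
    induction p using Polynomial.induction_on' with
    | add p q hp hq =>
      have : ∀ s : ℝ, (p+q).eval (Real.exp (T - s)) * h s
          = p.eval (Real.exp (T - s)) * h s + q.eval (Real.exp (T - s)) * h s := by
        intro s; rw [Polynomial.eval_add, add_mul]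
      rw [intervalIntegral.integral_congr (g := fun s => p.eval (Real.exp (T - s)) * h s + q.eval (Real.exp (T - s)) * h s) (fun s _ => this s)]
      rw [intervalIntegral.integral_add ((hcont p).intervalIntegrable _ _) ((hcont q).intervalIntegrable _ _), hp, hq, add_zero]
    | monomial n a =>
      have : ∀ s : ℝ, (Polynomial.monomial n a).eval (Real.exp (T - s)) * h s
          = a * ((Real.exp (T - s))^n * h s) := by
        intro s; rw [Polynomial.eval_monomial, mul_assoc]
      rw [intervalIntegral.integral_congr (g := fun s => a * ((Real.exp (T - s))^n * h s)) (fun s _ => this s)]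
      rw [intervalIntegral.integral_const_mul, hmom n, mul_zero]
  -- bound on h
  obtain ⟨M, hM⟩ := (isCompact_Icc (a := (0:ℝ)) (b := T)).exists_bound_of_continuousOn hh.continuousOn
  have hM0 : 0 ≤ M := le_trans (norm_nonneg _) (hM 0 ⟨le_refl _, hT.le⟩)
  -- key : ∫ h^2 = 0
  have hsq : ∫ s in (0:ℝ)..T, h s * h s = 0 := by
    have key : ∀ ε : ℝ, 0 < ε → |∫ s in (0:ℝ)..T, h s * h s| ≤ ε * M * T := by
      intro ε hε
      -- approximate x ↦ h (T - log x) on [1, exp T]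
      have hHc : ContinuousOn (fun x : ℝ => h (T - Real.log x)) (Icc 1 (Real.exp T)) := by
        apply (hh.comp_continuousOn (continuous_const.continuousOn.sub
          (Real.continuousOn_log.mono ?_)))
        intro x hx
        simp only [mem_compl_iff, mem_singleton_iff]
        have : (1:ℝ) ≤ x := hx.1
        positivity
      obtain ⟨p, hp⟩ := exists_polynomial_near_of_continuousOn 1 (Real.exp T)
        (fun x => h (T - Real.log x)) hHc ε hε
      -- on [0,T], p.eval (exp (T-s)) is within ε of h s
      have happrox : ∀ s ∈ Set.Icc (0:ℝ) T, |p.eval (Real.exp (T - s)) - h s| ≤ ε := by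
        intro s hs
        have h1 : Real.exp (T - s) ∈ Icc 1 (Real.exp T) := by
          constructor
          · rw [show (1:ℝ) = Real.exp 0 by simp]
            exact Real.exp_le_exp.mpr (by linarith [hs.2])
          · exact Real.exp_le_exp.mpr (by linarith [hs.1])
        have := hp _ h1
        rw [Real.log_exp] at this
        simpa using this.le
      have hdiff : ∫ s in (0:ℝ)..T, h s * h s
          = -∫ s in (0:ℝ)..T, (p.eval (Real.exp (T - s)) - h s) * h s := by
        have : ∀ s : ℝ, (p.eval (Real.exp (T - s)) - h s) * h s
            = p.eval (Real.exp (T - s)) * h s - h s * h s := by intro s; ring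
        rw [intervalIntegral.integral_congr (g := fun s => p.eval (Real.exp (T - s)) * h s - h s * h s) (fun s _ => this s)]
        rw [intervalIntegral.integral_sub (g := fun s => h s * h s) ((hcont p).intervalIntegrable _ _) ((hh.mul hh).intervalIntegrable _ _), hpoly p]
        ring
      rw [hdiff, abs_neg]
      have := intervalIntegral.norm_integral_le_of_norm_le_const
        (C := ε * M) (f := fun s => (p.eval (Real.exp (T - s)) - h s) * h s)
        (a := 0) (b := T) ?_
      · rw [Real.norm_eq_abs] at this
        calc |∫ s in (0:ℝ)..T, (p.eval (Real.exp (T - s)) - h s) * h s| ≤ ε * M * |T - 0| := this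
        _ = ε * M * T := by rw [sub_zero, abs_of_pos hT]
      · intro s hs
        rw [Set.uIoc_of_le hT.le] at hs
        have hs' : s ∈ Set.Icc (0:ℝ) T := Set.Ioc_subset_Icc_self hs
        rw [Real.norm_eq_abs, abs_mul]
        have h1 : |p.eval (Real.exp (T - s)) - h s| ≤ ε := happrox s hs'
        have h2 : |h s| ≤ M := by
          simpa [Real.norm_eq_abs] using hM s hs' 
        exact mul_le_mul h1 h2 (abs_nonneg _) hε.le
    -- conclude
    have hnn : 0 ≤ ∫ s in (0:ℝ)..T, h s * h s :=
      intervalIntegral.integral_nonneg hT.le (fun s _ => mul_self_nonneg _)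
    by_contra hne
    have hpos : 0 < ∫ s in (0:ℝ)..T, h s * h s := lt_of_le_of_ne hnn (Ne.symm hne)
    set I := ∫ s in (0:ℝ)..T, h s * h s
    have hMT : 0 < (M*T + 1) := by positivity
    have := key (I / (2 * (M * T + 1))) (by positivity)
    rw [abs_of_pos hpos, div_mul_eq_mul_div, div_mul_eq_mul_div, le_div_iff₀ (by positivity)] at this
    nlinarith [mul_nonneg hM0 hT.le, mul_nonneg hpos.le (mul_nonneg hM0 hT.le)]
  intro s hs
  have := zero_on_Icc hT (hh.mul hh) (fun x => mul_self_nonneg _) hsq s hs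
  exact mul_self_eq_zero.mp this

end Aux

section Aux2
open intervalIntegral Set Complex


lemma laplace_decay (T c C : ℝ) (hT : 0 < T) (hC : 0 ≤ C) (g : ℝ → ℂ) (hg : Continuous g)
    (hb : ∀ l : ℝ, c/2 < l →
      ‖∫ s in (0:ℝ)..T, ((Real.exp (-(l*s)) : ℝ) : ℂ) * g s‖
        ≤ C * Real.exp (-(l*T)) / (l - c/2)) :
    ∀ s ∈ Icc (0:ℝ) T, g s = 0 := by
  set Φ : ℂ → ℂ := fun z => ∫ s in (0:ℝ)..T, Complex.exp (z * ((T - s : ℝ) : ℂ)) * g s with hΦdef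
  have hec : ∀ z : ℂ, Continuous fun s : ℝ => Complex.exp (z * ((T - s : ℝ) : ℂ)) :=
    fun z => Complex.continuous_exp.comp (continuous_const.mul
      (Complex.continuous_ofReal.comp (continuous_const.sub continuous_id)))
  have hgsm : ∀ z : ℂ, Continuous fun s : ℝ => Complex.exp (z * ((T - s : ℝ) : ℂ)) * g s :=
    fun z => (hec z).mul hg
  -- differentiability
  have hΦ : Differentiable ℂ Φ := by
    intro z₀
    have := (intervalIntegral.hasDerivAt_integral_of_dominated_loc_of_deriv_le
      (F := fun z s => Complex.exp (z * ((T - s : ℝ) : ℂ)) * g s)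
      (F' := fun z s => Complex.exp (z * ((T - s : ℝ) : ℂ)) * ((T - s : ℝ) : ℂ) * g s)
      (x₀ := z₀) (a := (0:ℝ)) (b := T) (μ := volume)
      (bound := fun s => Real.exp ((‖z₀‖ + 1) * T) * (T * ‖g s‖))
      (Metric.ball_mem_nhds z₀ one_pos) ?_ ?_ ?_ ?_ ?_ ?_).2.differentiableAt
    · exact this
    · exact Filter.Eventually.of_forall fun z => (hgsm z).aestronglyMeasurable
    · exact (hgsm z₀).intervalIntegrable _ _
    · exact (((hec z₀).mul (Complex.continuous_ofReal.comp
        (continuous_const.sub continuous_id))).mul hg).aestronglyMeasurable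
    · apply Filter.Eventually.of_forall
      intro s hs x hx
      rw [Set.uIoc_of_le hT.le] at hs
      have hsT : 0 ≤ T - s := by linarith [hs.2]
      have hsT' : T - s ≤ T := by linarith [hs.1]
      have hxz : ‖x - z₀‖ < 1 := mem_ball_iff_norm.mp hx
      have hxn : ‖x‖ ≤ ‖z₀‖ + 1 := by
        have hxe : z₀ + (x - z₀) = x := by ring
        calc ‖x‖ = ‖z₀ + (x - z₀)‖ := by rw [hxe]
        _ ≤ ‖z₀‖ + ‖x - z₀‖ := norm_add_le _ _
        _ ≤ ‖z₀‖ + 1 := by linarith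
      rw [norm_mul, norm_mul, Complex.norm_exp]
      have h1 : (x * ((T - s : ℝ) : ℂ)).re = x.re * (T - s) := by
        simp [Complex.mul_re]
      rw [h1]
      have h2 : x.re * (T - s) ≤ (‖z₀‖ + 1) * T := by
        calc x.re * (T - s) ≤ (‖z₀‖ + 1) * (T - s) := by
              apply mul_le_mul_of_nonneg_right _ hsT
              exact le_trans (Complex.re_le_norm x) hxn
        _ ≤ (‖z₀‖ + 1) * T := by
              apply mul_le_mul_of_nonneg_left hsT' (by positivity)
      have h3 : ‖((T - s : ℝ) : ℂ)‖ ≤ T := by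
        rw [Complex.norm_real, Real.norm_eq_abs, _root_.abs_of_nonneg hsT]; exact hsT'
      calc Real.exp (x.re * (T - s)) * ‖((T - s : ℝ) : ℂ)‖ * ‖g s‖
          ≤ Real.exp ((‖z₀‖ + 1) * T) * T * ‖g s‖ := by
            apply mul_le_mul_of_nonneg_right _ (norm_nonneg _)
            exact mul_le_mul (Real.exp_le_exp.mpr h2) h3 (norm_nonneg _) (Real.exp_pos _).le
      _ = Real.exp ((‖z₀‖ + 1) * T) * (T * ‖g s‖) := by ring
    · exact (continuous_const.mul (continuous_const.mul hg.norm)).intervalIntegrable _ _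
    · apply Filter.Eventually.of_forall
      intro s _ x _
      have hd := ((hasDerivAt_id x).mul_const ((T - s : ℝ) : ℂ)).cexp.mul_const (g s)
      exact hd.congr_deriv (by simp)
  -- uniform bound for g
  obtain ⟨G, hG⟩ := (isCompact_Icc (a := (0:ℝ)) (b := T)).exists_bound_of_continuousOn
    hg.continuousOn
  have hG0 : 0 ≤ G := le_trans (norm_nonneg _) (hG 0 ⟨le_refl _, hT.le⟩)
  -- general bound for Φ
  have hbnd : ∀ z : ℂ, ‖Φ z‖ ≤ G * Real.exp (max z.re 0 * T) * T := by
    intro z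
    have := intervalIntegral.norm_integral_le_of_norm_le_const
      (C := G * Real.exp (max z.re 0 * T))
      (f := fun s => Complex.exp (z * ((T - s : ℝ) : ℂ)) * g s) (a := 0) (b := T) ?_
    · calc ‖Φ z‖ ≤ G * Real.exp (max z.re 0 * T) * |T - 0| := this
      _ = G * Real.exp (max z.re 0 * T) * T := by rw [sub_zero, _root_.abs_of_pos hT]
    · intro s hs
      rw [Set.uIoc_of_le hT.le] at hs
      have hsT : 0 ≤ T - s := by linarith [hs.2]
      have hsT' : T - s ≤ T := by linarith [hs.1]
      rw [norm_mul, Complex.norm_exp]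
      have h1 : (z * ((T - s : ℝ) : ℂ)).re = z.re * (T - s) := by simp [Complex.mul_re]
      rw [h1]
      have h2 : z.re * (T - s) ≤ max z.re 0 * T :=
        calc z.re * (T - s) ≤ max z.re 0 * (T - s) :=
              mul_le_mul_of_nonneg_right (le_max_left _ _) hsT
        _ ≤ max z.re 0 * T := mul_le_mul_of_nonneg_left hsT' (le_max_right _ _)
      have h3 : ‖g s‖ ≤ G := hG s ⟨hs.1.le, hs.2⟩
      calc Real.exp ((z.re * (T - s))) * ‖g s‖ ≤ Real.exp (max z.re 0 * T) * G :=
            mul_le_mul (Real.exp_le_exp.mpr h2) h3 (norm_nonneg _) (Real.exp_pos _).le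
      _ = G * Real.exp (max z.re 0 * T) := by ring
  -- relation to the Laplace transform on the real axis
  have hΦl : ∀ l : ℝ, Φ ↑l
      = Complex.exp (↑(l*T)) * ∫ s in (0:ℝ)..T, ((Real.exp (-(l*s)) : ℝ) : ℂ) * g s := by
    intro l
    rw [hΦdef]
    simp only
    rw [← intervalIntegral.integral_const_mul]
    apply intervalIntegral.integral_congr
    intro s _
    have key : Complex.exp (↑(l*T)) * ((Real.exp (-(l*s)) : ℝ) : ℂ)
        = Complex.exp (↑l * ((T - s : ℝ) : ℂ)) := by
      rw [Complex.ofReal_exp, ← Complex.exp_add]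
      congr 1
      push_cast
      ring
    show Complex.exp (↑l * ((T - s : ℝ) : ℂ)) * g s
        = Complex.exp (↑(l*T)) * (((Real.exp (-(l*s)) : ℝ) : ℂ) * g s)
    rw [← mul_assoc, key]
  have hΦl' : ∀ l : ℝ, c/2 < l → ‖Φ ↑l‖ ≤ C / (l - c/2) := by
    intro l hl
    rw [hΦl l, norm_mul, Complex.norm_exp, Complex.ofReal_re]
    calc Real.exp (l*T) * ‖∫ s in (0:ℝ)..T, ((Real.exp (-(l*s)) : ℝ) : ℂ) * g s‖
        ≤ Real.exp (l*T) * (C * Real.exp (-(l*T)) / (l - c/2)) := by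
          apply mul_le_mul_of_nonneg_left _ (Real.exp_pos _).le
          exact hb l hl
    _ = C / (l - c/2) := by
          rw [Real.exp_neg]
          field_simp
  -- Phragmen--Lindelof on the right half plane
  have hPL : ∀ z : ℂ, 0 ≤ z.re → ‖Φ z‖ ≤ G * T := by
    intro z hz
    apply PhragmenLindelof.right_half_plane_of_bounded_on_real hΦ.diffContOnCl
    · refine ⟨1, one_lt_two, T, ?_⟩
      apply Asymptotics.IsBigO.of_bound (G * T)
      apply Filter.Eventually.of_forall
      intro w
      have h1 : ‖Φ w‖ ≤ G * Real.exp (max w.re 0 * T) * T := hbnd w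
      have h2 : max w.re 0 * T ≤ T * ‖w‖ ^ (1:ℝ) := by
        rw [Real.rpow_one, mul_comm (max w.re 0) T]
        exact mul_le_mul_of_nonneg_left
          (max_le (Complex.re_le_norm w) (norm_nonneg w)) hT.le
      have h3 : ‖Real.exp (T * ‖w‖ ^ (1:ℝ))‖ = Real.exp (T * ‖w‖ ^ (1:ℝ)) := by
        rw [Real.norm_eq_abs, _root_.abs_of_pos (Real.exp_pos _)]
      rw [h3]
      calc ‖Φ w‖ ≤ G * Real.exp (max w.re 0 * T) * T := h1
      _ ≤ G * Real.exp (T * ‖w‖ ^ (1:ℝ)) * T :=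
          mul_le_mul_of_nonneg_right (mul_le_mul_of_nonneg_left
            (Real.exp_le_exp.mpr h2) hG0) hT.le
      _ = G * T * Real.exp (T * ‖w‖ ^ (1:ℝ)) := by ring
    · refine ⟨C, ?_⟩
      rw [Filter.eventually_map]
      filter_upwards [Filter.eventually_gt_atTop (c/2 + 1)] with l hl
      have h1 : c/2 < l := by linarith
      calc ‖Φ ↑l‖ ≤ C / (l - c/2) := hΦl' l h1
      _ ≤ C := by
          apply div_le_self hC
          linarith
    · intro y
      have := hbnd (y * I)
      have hre : ((y:ℂ) * I).re = 0 := by simp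
      rw [hre, max_self, zero_mul, Real.exp_zero, mul_one] at this
      exact this
    · exact hz
  -- Φ is bounded everywhere
  have hball : ∀ z : ℂ, ‖Φ z‖ ≤ G * T := by
    intro z
    rcases le_total 0 z.re with h | h
    · exact hPL z h
    · have := hbnd z
      rw [max_eq_right h, zero_mul, Real.exp_zero, mul_one] at this
      exact this
  -- Liouville: Φ is constant
  have hbded : Bornology.IsBounded (Set.range Φ) := by
    rw [isBounded_iff_forall_norm_le]
    exact ⟨G * T, by rintro _ ⟨z, rfl⟩; exact hball z⟩
  have hconst : ∀ z : ℂ, Φ z = Φ 0 := fun z => hΦ.apply_eq_apply_of_bounded hbded z 0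
  -- Φ 0 = 0
  have htend : Filter.Tendsto (fun l : ℝ => C / (l - c/2)) Filter.atTop (nhds 0) := by
    apply Filter.Tendsto.div_atTop (tendsto_const_nhds)
    have := Filter.tendsto_atTop_add_const_right Filter.atTop (-(c/2)) Filter.tendsto_id
    simpa [sub_eq_add_neg] using this
  have hΦ0 : Φ 0 = 0 := by
    rw [← norm_le_zero_iff]
    apply ge_of_tendsto htend
    filter_upwards [Filter.eventually_gt_atTop (c/2)] with l hl
    rw [show Φ 0 = Φ ↑l from (hconst ↑l).symm]
    exact hΦl' l hl
  have hzero : ∀ z : ℂ, Φ z = 0 := fun z => (hconst z).trans hΦ0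
  -- moments vanish
  have hmom : ∀ n : ℕ, ∫ s in (0:ℝ)..T, (((Real.exp (T - s))^n : ℝ) : ℂ) * g s = 0 := by
    intro n
    have := hzero ((n : ℕ) : ℂ)
    rw [hΦdef] at this
    simp only at this
    rw [← this]
    apply intervalIntegral.integral_congr
    intro s _
    show (((Real.exp (T - s))^n : ℝ) : ℂ) * g s = Complex.exp ((n:ℂ) * ((T - s : ℝ) : ℂ)) * g s
    congr 1
    rw [Complex.exp_nat_mul, ← Complex.ofReal_exp, ← Complex.ofReal_pow]
  -- real and imaginary moments
  have hmomcont : ∀ n : ℕ, Continuous fun s : ℝ => (((Real.exp (T - s))^n : ℝ) : ℂ) * g s := by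
    intro n
    exact ((Complex.continuous_ofReal.comp
      (((continuous_const.sub continuous_id).rexp).pow n))).mul hg
  have hre_mom : ∀ n : ℕ, ∫ s in (0:ℝ)..T, (Real.exp (T - s))^n * (g s).re = 0 := by
    intro n
    have h1 : ∫ s in (0:ℝ)..T, (Real.exp (T - s))^n * (g s).re
        = ∫ s in (0:ℝ)..T, Complex.reCLM ((((Real.exp (T - s))^n : ℝ) : ℂ) * g s) := by
      apply intervalIntegral.integral_congr
      intro s _
      show Real.exp (T - s)^n * (g s).re = Complex.reCLM ((((Real.exp (T - s))^n : ℝ) : ℂ) * g s)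
      rw [Complex.reCLM_apply, Complex.re_ofReal_mul]
    rw [h1, ContinuousLinearMap.intervalIntegral_comp_comm _ ((hmomcont n).intervalIntegrable _ _),
      hmom n]
    simp
  have him_mom : ∀ n : ℕ, ∫ s in (0:ℝ)..T, (Real.exp (T - s))^n * (g s).im = 0 := by
    intro n
    have h1 : ∫ s in (0:ℝ)..T, (Real.exp (T - s))^n * (g s).im
        = ∫ s in (0:ℝ)..T, Complex.imCLM ((((Real.exp (T - s))^n : ℝ) : ℂ) * g s) := by
      apply intervalIntegral.integral_congr
      intro s _
      show Real.exp (T - s)^n * (g s).im = Complex.imCLM ((((Real.exp (T - s))^n : ℝ) : ℂ) * g s)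
      rw [Complex.imCLM_apply, Complex.im_ofReal_mul]
    rw [h1, ContinuousLinearMap.intervalIntegral_comp_comm _ ((hmomcont n).intervalIntegrable _ _),
      hmom n]
    simp
  have hre := real_moments_case T hT (fun s => (g s).re)
    (Complex.continuous_re.comp hg) hre_mom
  have him := real_moments_case T hT (fun s => (g s).im)
    (Complex.continuous_im.comp hg) him_mom
  intro s hs
  exact Complex.ext (hre s hs) (him s hs)

end Aux2

open intervalIntegral Set

/-- Laplace-transform uniqueness step: if `K⋆` (with dense domain `D`) is such that
`K⋆ + c/2` is accretive and `(K⋆ + λ)D` is dense for `λ > c/2`, and a continuous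
`m : [0,∞) → 𝔥` satisfies `⟨φ, m(t)⟩ = −∫₀ᵗ ⟨K⋆φ, m(s)⟩ ds` for all `φ ∈ D`,
then `m ≡ 0`. -/


theorem laplace_uniqueness_step
    {𝔥 : Type*} [NormedAddCommGroup 𝔥] [InnerProductSpace ℂ 𝔥] [CompleteSpace 𝔥]
    (K : 𝔥 → 𝔥) (D : Set 𝔥) (c : ℝ)
    (hdense : Dense D)
    (hacc : ∀ x ∈ D, 0 ≤ (inner ℂ (K x + ((c / 2 : ℝ) : ℂ) • x) x : ℂ).re)
    (hran : ∀ l : ℝ, c / 2 < l → Dense ((fun x => K x + (l : ℂ) • x) '' D))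
    (m : ℝ → 𝔥) (hm : Continuous m)
    (heq : ∀ φ ∈ D, ∀ t : ℝ, 0 ≤ t →
      (inner ℂ φ (m t) : ℂ) = -∫ s in Set.Icc (0 : ℝ) t, (inner ℂ (K φ) (m s) : ℂ)) :
    ∀ t : ℝ, 0 ≤ t → m t = 0 := by
  have hinner_cont : ∀ y : 𝔥, Continuous fun s : ℝ => (inner ℂ y (m s) : ℂ) :=
    fun y => Continuous.inner continuous_const hm
  intro t ht
  rcases eq_or_lt_of_le ht with h0 | hT
  · -- t = 0
    have hz : ∀ φ ∈ D, (inner ℂ φ (m 0) : ℂ) = 0 := by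
      intro φ hφ
      have h := heq φ hφ 0 le_rfl
      rw [Set.Icc_self, show (volume.restrict ({0} : Set ℝ)) = 0 from
        Measure.restrict_eq_zero.mpr (measure_singleton 0), integral_zero_measure, neg_zero] at h
      exact h
    have hall : ∀ φ : 𝔥, (inner ℂ φ (m 0) : ℂ) = 0 := by
      have hcl : IsClosed {φ : 𝔥 | (inner ℂ φ (m 0) : ℂ) = 0} :=
        isClosed_eq (Continuous.inner continuous_id continuous_const) continuous_const
      have hsub : D ⊆ {φ : 𝔥 | (inner ℂ φ (m 0) : ℂ) = 0} := hz
      have := hcl.closure_subset_iff.mpr hsub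
      intro φ
      exact this (hdense.closure_eq ▸ Set.mem_univ φ : φ ∈ closure D)
    rw [← h0]
    exact inner_self_eq_zero.mp (hall (m 0))
  · -- t > 0, call it T
    set T := t with hTdef
    -- the Laplace vector
    set F : ℝ → 𝔥 := fun l => ∫ s in (0:ℝ)..T, Real.exp (-(l*s)) • m s with hFdef
    have hexpc : ∀ l : ℝ, Continuous fun s : ℝ => Real.exp (-(l*s)) := fun l =>
      Real.continuous_exp.comp ((continuous_const.mul continuous_id).neg)
    have hFint : ∀ l : ℝ, IntervalIntegrable (fun s => Real.exp (-(l*s)) • m s) volume 0 T :=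
      fun l => ((hexpc l).smul hm).intervalIntegrable 0 T
    -- (a) inner ℂ product against F
    have hswap : ∀ l : ℝ, ∀ y : 𝔥, (inner ℂ y (F l) : ℂ)
        = ∫ s in (0:ℝ)..T, ((Real.exp (-(l*s)) : ℝ) : ℂ) * (inner ℂ y (m s) : ℂ) := by
      intro l y
      rw [hFdef]
      simp only
      rw [show (inner ℂ y (∫ s in (0:ℝ)..T, Real.exp (-(l*s)) • m s) : ℂ)
          = ((innerSL ℂ y).restrictScalars ℝ) (∫ s in (0:ℝ)..T, Real.exp (-(l*s)) • m s) from rfl,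
        ← ContinuousLinearMap.intervalIntegral_comp_comm ((innerSL ℂ y).restrictScalars ℝ)
          (hFint l)]
      apply intervalIntegral.integral_congr
      intro s _
      show (inner ℂ y (Real.exp (-(l*s)) • m s) : ℂ) = _
      rw [inner_smul_right_eq_smul, Complex.real_smul]
    -- (b) the basic identity
    have hiden : ∀ l : ℝ, ∀ φ ∈ D, (inner ℂ (K φ) (F l) : ℂ)
        = -((Real.exp (-(l*T)) : ℝ) : ℂ) * (inner ℂ φ (m T) : ℂ)
          - (l : ℂ) * (inner ℂ φ (F l) : ℂ) := by
      intro l φ hφ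
      set v : ℝ → ℂ := fun s => (inner ℂ (K φ) (m s) : ℂ) with hvdef
      have hvc : Continuous v := hinner_cont (K φ)
      set V : ℝ → ℂ := fun r => ∫ s in (0:ℝ)..r, v s with hVdef
      have hu : ∀ r : ℝ, 0 ≤ r → (inner ℂ φ (m r) : ℂ) = -V r := by
        intro r hr
        rw [heq φ hφ r hr, hVdef]
        simp only
        rw [intervalIntegral.integral_of_le hr, ← integral_Icc_eq_integral_Ioc]
      have hV : ∀ r : ℝ, HasDerivAt V (v r) r := fun r =>
        (hvc.integral_hasStrictDerivAt 0 r).hasDerivAt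
      have hE : ∀ r : ℝ, HasDerivAt (fun r : ℝ => ((Real.exp (-(l*r)) : ℝ) : ℂ))
          ((-l * Real.exp (-(l*r)) : ℝ) : ℂ) r := by
        intro r
        have h1 : HasDerivAt (fun r : ℝ => -(l*r)) (-l) r := by
          exact ((hasDerivAt_id r).const_mul l).neg.congr_deriv (by simp)
        have h2 := h1.exp
        have h3 := h2.ofReal_comp
        convert h3 using 1
        push_cast
        ring
      have hP : ∀ r : ℝ, HasDerivAt (fun r : ℝ => ((Real.exp (-(l*r)) : ℝ) : ℂ) * V r)
          (((-l * Real.exp (-(l*r)) : ℝ) : ℂ) * V r + ((Real.exp (-(l*r)) : ℝ) : ℂ) * v r) r :=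
        fun r => (hE r).mul (hV r)
      have hint1 : IntervalIntegrable (fun r => ((-l * Real.exp (-(l*r)) : ℝ) : ℂ) * V r)
          volume 0 T := by
        apply Continuous.intervalIntegrable
        exact (Complex.continuous_ofReal.comp ((continuous_const.mul (hexpc l)))).mul
          (intervalIntegral.continuous_primitive (fun a b => hvc.intervalIntegrable a b) 0)
      have hint2 : IntervalIntegrable (fun r => ((Real.exp (-(l*r)) : ℝ) : ℂ) * v r)
          volume 0 T :=
        ((Complex.continuous_ofReal.comp (hexpc l)).mul hvc).intervalIntegrable 0 T
      have hparts := intervalIntegral.integral_eq_sub_of_hasDerivAt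
        (f := fun r : ℝ => ((Real.exp (-(l*r)) : ℝ) : ℂ) * V r) (fun r _ => hP r)
        (hint1.add hint2)
      rw [intervalIntegral.integral_add hint1 hint2] at hparts
      have hV0 : V 0 = 0 := intervalIntegral.integral_same
      rw [hV0, mul_zero, sub_zero] at hparts
      -- rewrite first piece
      have hconstmul : ∫ r in (0:ℝ)..T, ((-l * Real.exp (-(l*r)) : ℝ) : ℂ) * V r
          = (-l : ℂ) * ∫ r in (0:ℝ)..T, ((Real.exp (-(l*r)) : ℝ) : ℂ) * V r := by
        rw [← intervalIntegral.integral_const_mul]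
        apply intervalIntegral.integral_congr
        intro r _
        push_cast
        ring
      rw [hconstmul] at hparts
      -- identify ∫ e * V with -⟨φ, F l⟩
      have hVF : ∫ r in (0:ℝ)..T, ((Real.exp (-(l*r)) : ℝ) : ℂ) * V r
          = -(inner ℂ φ (F l) : ℂ) := by
        rw [hswap l φ, ← intervalIntegral.integral_neg]
        apply intervalIntegral.integral_congr
        intro r hr
        rw [Set.uIcc_of_le hT.le] at hr
        have : V r = -(inner ℂ φ (m r) : ℂ) := by
          rw [hu r hr.1]; ring
        show ((Real.exp (-(l*r)) : ℝ) : ℂ) * V r = -(((Real.exp (-(l*r)) : ℝ) : ℂ) * inner ℂ φ (m r))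
        rw [this]
        ring
      -- identify ⟨K φ, F l⟩ with the exponential integral of v
      have hKF : (inner ℂ (K φ) (F l) : ℂ)
          = ∫ r in (0:ℝ)..T, ((Real.exp (-(l*r)) : ℝ) : ℂ) * v r := hswap l (K φ)
      have hVT : V T = -(inner ℂ φ (m T) : ℂ) := by
        rw [hu T hT.le]; ring
      rw [hVF, hVT] at hparts
      rw [hKF]
      linear_combination hparts
    -- (c) accretivity bound
    have hacc2 : ∀ l : ℝ, c/2 < l → ∀ φ ∈ D, (l - c/2) * ‖φ‖ ≤ ‖K φ + (l:ℂ) • φ‖ := by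
      intro l hl φ hφ
      have hsplit : K φ + (l:ℂ) • φ
          = (K φ + ((c/2 : ℝ):ℂ) • φ) + ((l - c/2 : ℝ):ℂ) • φ := by
        rw [add_assoc, ← add_smul]
        norm_num
      have hre : ((l : ℝ) - c/2) * ‖φ‖^2 ≤ (inner ℂ (K φ + (l:ℂ) • φ) φ : ℂ).re := by
        rw [hsplit, inner_add_left, Complex.add_re]
        have h2 : (inner ℂ (((l - c/2 : ℝ):ℂ) • φ) φ : ℂ).re = (l - c/2) * ‖φ‖^2 := by
          rw [inner_smul_left, inner_self_eq_norm_sq_to_K, Complex.conj_ofReal]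
          norm_cast
          simp [Complex.mul_re]
          left
          norm_cast
        rw [h2]
        linarith [hacc φ hφ]
      have habs : (inner ℂ (K φ + (l:ℂ) • φ) φ : ℂ).re ≤ ‖K φ + (l:ℂ) • φ‖ * ‖φ‖ := by
        calc (inner ℂ (K φ + (l:ℂ) • φ) φ : ℂ).re ≤ ‖(inner ℂ (K φ + (l:ℂ) • φ) φ : ℂ)‖ :=
              Complex.re_le_norm _
        _ = ‖(inner ℂ (K φ + (l:ℂ) • φ) φ : ℂ)‖ := rfl
        _ ≤ ‖K φ + (l:ℂ) • φ‖ * ‖φ‖ := norm_inner_le_norm _ _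
      rcases eq_or_lt_of_le (norm_nonneg φ) with hn0 | hn0
      · rw [← hn0, mul_zero]
        exact norm_nonneg _
      · have := le_trans hre habs
        rw [pow_two, ← mul_assoc] at this
        exact le_of_mul_le_mul_right this hn0
    -- (d) the bound for all vectors, by density
    have hdbound : ∀ l : ℝ, c/2 < l → ∀ x : 𝔥, ‖(inner ℂ x (F l) : ℂ)‖
        ≤ ‖x‖ * (Real.exp (-(l*T)) * ‖m T‖ / (l - c/2)) := by
      intro l hl x
      set B := Real.exp (-(l*T)) * ‖m T‖ / (l - c/2) with hB
      have hB0 : 0 ≤ B := by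
        apply div_nonneg _ (by linarith)
        positivity
      have hS : ∀ ζ ∈ (fun x => K x + (l : ℂ) • x) '' D,
          ‖(inner ℂ ζ (F l) : ℂ)‖ ≤ ‖ζ‖ * B := by
        rintro ζ ⟨φ, hφ, rfl⟩
        have hval : (inner ℂ (K φ + (l:ℂ) • φ) (F l) : ℂ)
            = -((Real.exp (-(l*T)) : ℝ) : ℂ) * (inner ℂ φ (m T) : ℂ) := by
          rw [inner_add_left, inner_smul_left, Complex.conj_ofReal, hiden l φ hφ]
          ring
        rw [hval]
        have h1 : ‖-((Real.exp (-(l*T)) : ℝ) : ℂ) * (inner ℂ φ (m T) : ℂ)‖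
            = Real.exp (-(l*T)) * ‖(inner ℂ φ (m T) : ℂ)‖ := by
          rw [norm_mul, norm_neg, Complex.norm_real, Real.norm_eq_abs,
            _root_.abs_of_pos (Real.exp_pos _)]
        rw [h1]
        have h2 : ‖(inner ℂ φ (m T) : ℂ)‖ ≤ ‖φ‖ * ‖m T‖ := by
          exact norm_inner_le_norm _ _
        have h3 : ‖φ‖ ≤ ‖K φ + (l:ℂ) • φ‖ / (l - c/2) := by
          rw [le_div_iff₀ (by linarith)]
          calc ‖φ‖ * (l - c/2) = (l - c/2) * ‖φ‖ := by ring
          _ ≤ ‖K φ + (l:ℂ) • φ‖ := hacc2 l hl φ hφ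
        calc Real.exp (-(l*T)) * ‖(inner ℂ φ (m T) : ℂ)‖
            ≤ Real.exp (-(l*T)) * (‖φ‖ * ‖m T‖) :=
              mul_le_mul_of_nonneg_left h2 (Real.exp_pos _).le
        _ ≤ Real.exp (-(l*T)) * (‖K φ + (l:ℂ) • φ‖ / (l - c/2) * ‖m T‖) := by
              apply mul_le_mul_of_nonneg_left _ (Real.exp_pos _).le
              exact mul_le_mul_of_nonneg_right h3 (norm_nonneg _)
        _ = ‖K φ + (l:ℂ) • φ‖ * B := by
              rw [hB]
              ring
      have hclosed : IsClosed {ζ : 𝔥 | ‖(inner ℂ ζ (F l) : ℂ)‖ ≤ ‖ζ‖ * B} := by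
        apply isClosed_le
        · exact continuous_norm.comp (Continuous.inner continuous_id continuous_const)
        · exact continuous_norm.mul continuous_const
      have hsub := hclosed.closure_subset_iff.mpr hS
      rw [(hran l hl).closure_eq] at hsub
      exact hsub (Set.mem_univ x)
    -- (e) conclude via the scalar Laplace lemma
    have hfinal : ∀ x : 𝔥, (inner ℂ x (m T) : ℂ) = 0 := by
      intro x
      have := laplace_decay T c (‖x‖ * ‖m T‖) hT (by positivity)
        (fun s => (inner ℂ x (m s) : ℂ)) (hinner_cont x) ?_ T ⟨hT.le, le_refl T⟩
      · exact this
      · intro l hl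
        rw [← hswap l x]
        calc ‖(inner ℂ x (F l) : ℂ)‖
            ≤ ‖x‖ * (Real.exp (-(l*T)) * ‖m T‖ / (l - c/2)) := hdbound l hl x
        _ = ‖x‖ * ‖m T‖ * Real.exp (-(l*T)) / (l - c/2) := by ring
    exact inner_self_eq_zero.mp (hfinal (m T))
end
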